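/- Let S be a ring and R a commutative subring, A ∈ Mat_n(R) invertible in Mat_n(S) with inverse B. Then (det A)^{-1} commutes with every entry of adj(A), and B has commuting entries; in particular the inverse of A, though a priori a matrix over the noncommutative ring S, is a matrix over the commutative subring RT^{-1} of S. -/

import Mathlib

/-- In any ring, a two-sided inverse of `a` commutes with everything commuting with `a`. -/
lemma inv_comm_of_comm' {M : Type*} [Ring M] {a b c : M}
    (h1 : a * b = 1) (h2 : b * a = 1) (h : c * a = a * c) : b * c = c * b := by
  calc b * c = b * c * (a * b) := by rw [h1, mul_one]
    _ = b * (c * a) * b := by simp [mul_assoc]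
    _ = b * (a * c) * b := by rw [h]
    _ = (b * a) * (c * b) := by simp [mul_assoc]
    _ = c * b := by rw [h2, one_mul]

/-- If `c` commutes with all entries of `M` and `B` is a two-sided inverse of `M`,
then `c` commutes with all entries of `B`. -/
lemma comm_entries_inv {S : Type*} [Ring S] {n : ℕ} {M B : Matrix (Fin n) (Fin n) S}
    (h1 : M * B = 1) (h2 : B * M = 1) {c : S}
    (hc : ∀ i j, c * M i j = M i j * c) : ∀ k l, c * B k l = B k l * c := by
  classical
  have hC : (Matrix.scalar (Fin n) c) * M = M * Matrix.scalar (Fin n) c := by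
    ext p q
    rw [Matrix.scalar_apply, Matrix.diagonal_mul, Matrix.mul_diagonal]
    exact hc p q
  have hBC := inv_comm_of_comm' h1 h2 hC
  intro k l
  have := congrFun (congrFun hBC k) l
  rw [Matrix.scalar_apply, Matrix.mul_diagonal, Matrix.diagonal_mul] at this
  exact this.symm

/-- If the entries of `M` pairwise commute and `B` is a two-sided inverse of `M`,
then the entries of `B` pairwise commute. -/
lemma entries_of_inv_comm {S : Type*} [Ring S] {n : ℕ} {M B : Matrix (Fin n) (Fin n) S}
    (hM : ∀ i j k l, M i j * M k l = M k l * M i j)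
    (h1 : M * B = 1) (h2 : B * M = 1) :
    ∀ i j k l, B i j * B k l = B k l * B i j := by
  classical
  intro i j k l
  -- work in matrices over the ring `S' = Matrix (Fin n) (Fin n) S`
  have hXXi : (M.map (Matrix.scalar (Fin n))) * (B.map (Matrix.scalar (Fin n))) = 1 := by
    rw [← Matrix.map_mul, h1]
    exact Matrix.map_one _ (map_zero _) (map_one _)
  have hXiX : (B.map (Matrix.scalar (Fin n))) * (M.map (Matrix.scalar (Fin n))) = 1 := by
    rw [← Matrix.map_mul, h2]
    exact Matrix.map_one _ (map_zero _) (map_one _)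
  have hYYi : (Matrix.scalar (Fin n) M) * (Matrix.scalar (Fin n) B) = 1 := by
    rw [← map_mul, h1, map_one]
  have hYiY : (Matrix.scalar (Fin n) B) * (Matrix.scalar (Fin n) M) = 1 := by
    rw [← map_mul, h2, map_one]
  have hYX : (Matrix.scalar (Fin n) M) * (M.map (Matrix.scalar (Fin n)))
      = (M.map (Matrix.scalar (Fin n))) * (Matrix.scalar (Fin n) M) := by
    ext p q u v
    rw [Matrix.scalar_apply, Matrix.diagonal_mul, Matrix.mul_diagonal]
    rw [Matrix.map_apply, Matrix.scalar_apply, Matrix.mul_diagonal, Matrix.diagonal_mul]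
    exact hM u v p q
  have hXiY := inv_comm_of_comm' hXXi hXiX hYX
  have hYiXi := inv_comm_of_comm' hYYi hYiY hXiY
  have h := congrFun (congrFun hYiXi i) j
  rw [Matrix.scalar_apply, Matrix.diagonal_mul, Matrix.mul_diagonal, Matrix.map_apply,
    Matrix.scalar_apply] at h
  have h2' := congrFun (congrFun h k) l
  rw [Matrix.diagonal_mul, Matrix.mul_diagonal] at h2'
  exact h2'.symm

theorem inverse_entries_commute_and_in_RTinv
    {R S : Type*} [CommRing R] [Ring S] (f : R →+* S) (hf : Function.Injective f)
    {n : ℕ} (A : Matrix (Fin n) (Fin n) R) (B : Matrix (Fin n) (Fin n) S)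
    (hAB : A.map f * B = 1) (hBA : B * A.map f = 1) :
    ∃ s : S, f A.det * s = 1 ∧ s * f A.det = 1 ∧
      (∀ i j, s * f (A.adjugate i j) = f (A.adjugate i j) * s) ∧
      (∀ i j k l, B i j * B k l = B k l * B i j) ∧
      (∀ i j, ∃ r t : R, ∃ u : S, f t * u = 1 ∧ u * f t = 1 ∧ B i j = f r * u) := by
  classical
  -- entries of `B` commute with everything in the image of `f`
  have hfB : ∀ (r : R) (k l : Fin n), f r * B k l = B k l * f r := by
    intro r
    exact comm_entries_inv hAB hBA (fun i j => by
      rw [Matrix.map_apply, ← map_mul, ← map_mul, mul_comm])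
  -- entries of `B` pairwise commute
  have hBB : ∀ i j k l, B i j * B k l = B k l * B i j :=
    entries_of_inv_comm (fun i j k l => by
      simp only [Matrix.map_apply, ← map_mul, mul_comm]) hAB hBA
  -- adjugate relation: f (adj A i j) = f (det A) * B i j
  have hadj : ∀ i j, f (A.adjugate i j) = f A.det * B i j := by
    have h1 : (A.adjugate.map f) * (A.map f) = Matrix.diagonal (fun _ => f A.det) := by
      rw [← Matrix.map_mul, Matrix.adjugate_mul]
      ext p q
      simp [Matrix.map_apply, Matrix.smul_apply, Matrix.one_apply, Matrix.diagonal,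
        apply_ite f, mul_ite]
    have h2 : A.adjugate.map f = Matrix.diagonal (fun _ => f A.det) * B := by
      calc A.adjugate.map f = A.adjugate.map f * (A.map f * B) := by rw [hAB, mul_one]
        _ = (A.adjugate.map f * A.map f) * B := by rw [mul_assoc]
        _ = Matrix.diagonal (fun _ => f A.det) * B := by rw [h1]
    intro i j
    have := congrFun (congrFun h2 i) j
    rw [Matrix.diagonal_mul] at this
    exact this
  -- the commutative subring generated by `f R` and the entries of `B`
  set gens : Set S := Set.range f ∪ Set.range (fun p : Fin n × Fin n => B p.1 p.2) with hgens
  have hcomm : ∀ x ∈ gens, ∀ y ∈ gens, x * y = y * x := by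
    rintro x (⟨r, rfl⟩ | ⟨⟨i, j⟩, rfl⟩) y (⟨r', rfl⟩ | ⟨⟨k, l⟩, rfl⟩)
    · rw [← map_mul, ← map_mul, mul_comm]
    · exact hfB r k l
    · exact (hfB r' i j).symm
    · exact hBB i j k l
  letI : CommRing (Subring.closure gens) := Subring.closureCommRingOfComm hcomm
  have hmemf : ∀ r : R, f r ∈ Subring.closure gens := fun r =>
    Subring.subset_closure (Or.inl ⟨r, rfl⟩)
  have hmemB : ∀ i j, B i j ∈ Subring.closure gens := fun i j =>
    Subring.subset_closure (Or.inr ⟨(i, j), rfl⟩)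
  set f' : R →+* Subring.closure gens :=
    f.codRestrict (Subring.closure gens) hmemf with hf'
  set B' : Matrix (Fin n) (Fin n) (Subring.closure gens) :=
    fun i j => ⟨B i j, hmemB i j⟩ with hB'
  have hAB' : A.map f' * B' = 1 := by
    ext i j
    have : ((A.map f' * B') i j : S) = ((1 : Matrix (Fin n) (Fin n) (Subring.closure gens)) i j : S) := by
      push_cast [Matrix.mul_apply, Matrix.one_apply, apply_ite]
      have := congrFun (congrFun hAB i) j
      rw [Matrix.mul_apply] at this
      simpa [Matrix.map_apply, Matrix.one_apply, apply_ite, hf', hB'] using this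
    exact_mod_cast this
  have hdet : (A.map f').det * B'.det = 1 := by
    rw [← Matrix.det_mul, hAB', Matrix.det_one]
  have hdet' : (A.map f').det = f' A.det := ((f'.map_det A).symm)
  refine ⟨(B'.det : S), ?_, ?_, ?_, hBB, ?_⟩
  · have := congrArg (Subtype.val) hdet
    rw [hdet'] at this
    simpa [hf'] using this
  · have : B'.det * (A.map f').det = 1 := by rw [mul_comm]; exact hdet
    rw [hdet'] at this
    simpa [hf'] using congrArg Subtype.val this
  · intro i j
    have h := mul_comm B'.det (f' (A.adjugate i j))
    simpa [hf'] using congrArg Subtype.val h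
  · intro i j
    refine ⟨A.adjugate i j, A.det, (B'.det : S), ?_, ?_, ?_⟩
    · have := congrArg (Subtype.val) hdet
      rw [hdet'] at this
      simpa [hf'] using this
    · have : B'.det * (A.map f').det = 1 := by rw [mul_comm]; exact hdet
      rw [hdet'] at this
      simpa [hf'] using congrArg Subtype.val this
    · -- B i j = f (adj A i j) * det B'
      have hsd : (B'.det : S) * f A.det = 1 := by
        have : B'.det * (A.map f').det = 1 := by rw [mul_comm]; exact hdet
        rw [hdet'] at this
        simpa [hf'] using congrArg Subtype.val this
      calc B i j = 1 * B i j := (one_mul _).symm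
        _ = ((B'.det : S) * f A.det) * B i j := by rw [hsd]
        _ = (B'.det : S) * (f A.det * B i j) := by rw [mul_assoc]
        _ = (B'.det : S) * f (A.adjugate i j) := by rw [← hadj]
        _ = f (A.adjugate i j) * (B'.det : S) := by
            have h := mul_comm B'.det (f' (A.adjugate i j))
            simpa [hf'] using congrArg Subtype.val h
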